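/- arXiv:2002.10002 — 2 statements merged into one kernel-verified Lean document; each statement's English description precedes it below -/
import Mathlib

section
/- Let μ be any probability measure on ℝ^d, let μ* be an m̂-strongly log-concave probability measure with mode θ_U* (the minimizer of its negative log-density), and let p be a positive even integer. Then E_{θ∼μ}[‖θ − θ_U*‖^p] ≤ 2^{p−1}·W_p^p(μ, μ*) + (10^p/2)·(dp/m̂)^{p/2}. -/
open MeasureTheory
open scoped ENNReal RealInnerProductSpace BigOperators


lemma auxA (k : ℕ) (hk : 0 < k) (u : ℝ) (hu : 0 ≤ u) :
    u ^ k ≤ (k : ℝ) ^ k * Real.exp (u - k) := by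
  have hk' : (0:ℝ) < k := by exact_mod_cast hk
  have h1 : u / k ≤ Real.exp (u / k - 1) := by
    have := Real.add_one_le_exp (u / k - 1); linarith
  have h2 : (u / k) ^ k ≤ (Real.exp (u / k - 1)) ^ k :=
    pow_le_pow_left₀ (div_nonneg hu hk'.le) h1 k
  have h3 : (Real.exp (u / k - 1)) ^ k = Real.exp (u - k) := by
    rw [← Real.exp_nat_mul]
    congr 1
    field_simp
  calc u ^ k = (k : ℝ) ^ k * (u / k) ^ k := by
        rw [← mul_pow]; congr 1; field_simp
    _ ≤ (k : ℝ) ^ k * Real.exp (u - k) := by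
        rw [← h3]; exact mul_le_mul_of_nonneg_left h2 (by positivity)

lemma auxB {d : ℕ} {mhat : ℝ} {U : EuclideanSpace ℝ (Fin d) → ℝ}
    (hU : StrongConvexOn Set.univ mhat U)
    {θU : EuclideanSpace ℝ (Fin d)} (hmode : ∀ θ, U θU ≤ U θ)
    {s : ℝ} (hs0 : 0 ≤ s) (hs1 : s ≤ 1) (y : EuclideanSpace ℝ (Fin d)) :
    U (θU + s • y) + mhat / 2 * s * (1 - s) * ‖y‖ ^ 2 ≤ U (θU + y) := by
  have h := hU.2 (Set.mem_univ (θU + y)) (Set.mem_univ θU) hs0 (by linarith : (0:ℝ) ≤ 1 - s)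
    (by ring)
  have e1 : s • (θU + y) + (1 - s) • θU = θU + s • y := by
    rw [smul_add, sub_smul, one_smul]; abel
  have e2 : θU + y - θU = y := by abel
  rw [e1, e2] at h
  have h2 : (1 - s) * U θU ≤ (1 - s) * U (θU + y) :=
    mul_le_mul_of_nonneg_left (hmode _) (by linarith)
  simp only [smul_eq_mul] at h
  nlinarith [h, h2]

lemma momentBound (d : ℕ) (hd : 0 < d) (mhat : ℝ) (hm : 0 < mhat)
    (U : EuclideanSpace ℝ (Fin d) → ℝ)
    (hU : StrongConvexOn Set.univ mhat U)
    (θU : EuclideanSpace ℝ (Fin d)) (hmode : ∀ θ, U θU ≤ U θ)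
    (μstar : Measure (EuclideanSpace ℝ (Fin d))) [IsProbabilityMeasure μstar]
    (hμ : ∀ s : Set (EuclideanSpace ℝ (Fin d)), MeasurableSet s →
      μstar s = (∫⁻ θ in s, ENNReal.ofReal (Real.exp (-U θ)))
        / ∫⁻ θ, ENNReal.ofReal (Real.exp (-U θ)))
    (k : ℕ) (hk : 0 < k) :
    (∫⁻ θ, (‖θ - θU‖₊ : ℝ≥0∞) ^ (2 * k) ∂μstar)
      ≤ ENNReal.ofReal ((2 * ((d : ℝ) + 2 * k) / mhat) ^ k) := by
  classical
  -- continuity and measurability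
  have hUcont : Continuous U := by
    have h0 : (0 : ℝ → ℝ) ≤ fun r : ℝ => mhat / 2 * r ^ 2 := by
      intro r; dsimp; positivity
    have := (hU.convexOn h0).continuousOn isOpen_univ
    rwa [continuousOn_univ] at this
  set g : EuclideanSpace ℝ (Fin d) → ℝ≥0∞ :=
    fun θ => ENNReal.ofReal (Real.exp (-U θ)) with hg
  have hgmeas : Measurable g :=
    ENNReal.measurable_ofReal.comp (Real.continuous_exp.comp hUcont.neg).measurable
  set Z : ℝ≥0∞ := ∫⁻ θ, g θ with hZ
  -- Z is nonzero and finite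
  have hμuniv := hμ Set.univ MeasurableSet.univ
  rw [Measure.restrict_univ, measure_univ] at hμuniv
  have hZ0 : Z ≠ 0 := by
    intro h; rw [← hZ] at hμuniv; rw [h] at hμuniv; simp at hμuniv
  have hZtop : Z ≠ ∞ := by
    intro h; rw [← hZ] at hμuniv; rw [h] at hμuniv; simp at hμuniv
  -- μstar as a density measure
  have hμeq : μstar = Z⁻¹ • (volume.withDensity g) := by
    ext s hs
    rw [hμ s hs, Measure.smul_apply, withDensity_apply _ hs, smul_eq_mul,
      ENNReal.div_eq_inv_mul]
  -- real constants
  set D : ℝ := (d : ℝ) with hD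
  set kR : ℝ := (k : ℝ) with hkR
  have hDpos : 0 < D := by rw [hD]; exact_mod_cast hd
  have hkpos : 0 < kR := by rw [hkR]; exact_mod_cast hk
  set T : ℝ := D + 2 * kR with hT
  have hTpos : 0 < T := by positivity
  set sR : ℝ := (D + kR) / T with hsR
  have hsRpos : 0 < sR := by positivity
  have hsRle : sR ≤ 1 := by
    rw [hsR, div_le_one hTpos, hT]; linarith
  have h1s : 1 - sR = kR / T := by
    rw [hsR]; field_simp; ring
  have h1spos : 0 < 1 - sR := by rw [h1s]; positivity
  set c : ℝ := mhat / 2 * sR * (1 - sR) with hc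
  have hcpos : 0 < c := by positivity
  -- the key integral bound
  have key : (∫⁻ y, ENNReal.ofReal (Real.exp (c * ‖y‖ ^ 2)) * g (θU + y))
      ≤ ENNReal.ofReal ((sR ^ d)⁻¹) * Z := by
    have step1 : (∫⁻ y, ENNReal.ofReal (Real.exp (c * ‖y‖ ^ 2)) * g (θU + y))
        ≤ ∫⁻ y, g (θU + sR • y) := by
      apply lintegral_mono
      intro y
      rw [hg]
      dsimp only
      rw [← ENNReal.ofReal_mul (Real.exp_nonneg _), ← Real.exp_add]
      apply ENNReal.ofReal_le_ofReal
      apply Real.exp_le_exp.mpr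
      have := auxB hU hmode hsRpos.le hsRle y
      rw [← hc] at this
      linarith
    have hmeas2 : Measurable fun z => g (θU + z) :=
      hgmeas.comp (measurable_const.add measurable_id)
    have step2 : (∫⁻ y, g (θU + sR • y)) = ENNReal.ofReal ((sR ^ d)⁻¹) * Z := by
      have hmap := Measure.map_addHaar_smul (volume : Measure (EuclideanSpace ℝ (Fin d)))
        (ne_of_gt hsRpos)
      have hl : (∫⁻ z, g (θU + z) ∂(Measure.map (sR • ·) volume))
          = ∫⁻ y, g (θU + sR • y) := by
        rw [lintegral_map hmeas2 (measurable_const_smul sR)]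
      rw [← hl, hmap, lintegral_smul_measure]
      have htr : (∫⁻ z, g (θU + z)) = Z := lintegral_add_left_eq_self g θU
      rw [htr]
      congr 1
      rw [finrank_euclideanSpace_fin]
      rw [abs_of_nonneg (by positivity)]
    exact step1.trans (le_of_eq step2)
  -- pointwise moment bound
  set K : ℝ := kR ^ k * Real.exp (-kR) / c ^ k with hK
  have hKpos : 0 < K := by positivity
  have ptwise : ∀ y : EuclideanSpace ℝ (Fin d),
      (‖y‖₊ : ℝ≥0∞) ^ (2 * k) ≤ ENNReal.ofReal K * ENNReal.ofReal (Real.exp (c * ‖y‖ ^ 2)) := by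
    intro y
    have hreal : ‖y‖ ^ (2 * k) ≤ K * Real.exp (c * ‖y‖ ^ 2) := by
      have hA := auxA k hk (c * ‖y‖ ^ 2) (by positivity)
      have hexpand : (c * ‖y‖ ^ 2) ^ k = c ^ k * ‖y‖ ^ (2 * k) := by
        rw [mul_pow, ← pow_mul]
      rw [hexpand] at hA
      rw [hK]
      rw [Real.exp_sub] at hA
      have : ‖y‖ ^ (2 * k) ≤ kR ^ k * Real.exp (c * ‖y‖ ^ 2) / Real.exp kR / c ^ k := by
        rw [div_div, le_div_iff₀ (by positivity)]
        calc ‖y‖ ^ (2 * k) * (Real.exp kR * c ^ k)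
            = c ^ k * ‖y‖ ^ (2 * k) * Real.exp kR := by ring
          _ ≤ kR ^ k * (Real.exp (c * ‖y‖ ^ 2) / Real.exp (kR)) * Real.exp kR := by
              apply mul_le_mul_of_nonneg_right _ (Real.exp_nonneg _)
              rw [hkR]; exact hA
          _ = kR ^ k * Real.exp (c * ‖y‖ ^ 2) := by
              field_simp
      calc ‖y‖ ^ (2 * k) ≤ kR ^ k * Real.exp (c * ‖y‖ ^ 2) / Real.exp kR / c ^ k := this
        _ = kR ^ k * Real.exp (-kR) / c ^ k * Real.exp (c * ‖y‖ ^ 2) := by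
            rw [Real.exp_neg]; field_simp
    calc (‖y‖₊ : ℝ≥0∞) ^ (2 * k) = ENNReal.ofReal (‖y‖ ^ (2 * k)) := by
          rw [ENNReal.ofReal_pow (norm_nonneg _), ofReal_norm, enorm_eq_nnnorm]

      _ ≤ ENNReal.ofReal (K * Real.exp (c * ‖y‖ ^ 2)) := ENNReal.ofReal_le_ofReal hreal
      _ = ENNReal.ofReal K * ENNReal.ofReal (Real.exp (c * ‖y‖ ^ 2)) :=
          ENNReal.ofReal_mul hKpos.le
  -- assemble
  have hfmeas : Measurable fun θ => (‖θ - θU‖₊ : ℝ≥0∞) ^ (2 * k) := by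
    apply Measurable.pow_const
    exact (measurable_nnnorm.comp (measurable_id.sub measurable_const)).coe_nnreal_ennreal
  have hint : (∫⁻ θ, (‖θ - θU‖₊ : ℝ≥0∞) ^ (2 * k) ∂μstar)
      = Z⁻¹ * ∫⁻ θ, (‖θ - θU‖₊ : ℝ≥0∞) ^ (2 * k) * g θ := by
    rw [hμeq, lintegral_smul_measure,
      lintegral_withDensity_eq_lintegral_mul volume hgmeas hfmeas]
    congr 1
    apply lintegral_congr
    intro θ
    simp [mul_comm]
  rw [hint]
  have htrans : (∫⁻ θ, (‖θ - θU‖₊ : ℝ≥0∞) ^ (2 * k) * g θ)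
      = ∫⁻ y, (‖y‖₊ : ℝ≥0∞) ^ (2 * k) * g (θU + y) := by
    rw [← lintegral_add_left_eq_self (fun θ => (‖θ - θU‖₊ : ℝ≥0∞) ^ (2 * k) * g θ) θU]
    apply lintegral_congr
    intro y
    simp [add_sub_cancel_left]
  rw [htrans]
  have hbound : (∫⁻ y, (‖y‖₊ : ℝ≥0∞) ^ (2 * k) * g (θU + y))
      ≤ ENNReal.ofReal K * (ENNReal.ofReal ((sR ^ d)⁻¹) * Z) := by
    calc (∫⁻ y, (‖y‖₊ : ℝ≥0∞) ^ (2 * k) * g (θU + y))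
        ≤ ∫⁻ y, ENNReal.ofReal K * (ENNReal.ofReal (Real.exp (c * ‖y‖ ^ 2)) * g (θU + y)) := by
          apply lintegral_mono
          intro y
          dsimp only
          rw [← mul_assoc]
          exact mul_le_mul_left (ptwise y) _
      _ = ENNReal.ofReal K * ∫⁻ y, ENNReal.ofReal (Real.exp (c * ‖y‖ ^ 2)) * g (θU + y) :=
          lintegral_const_mul' _ _ ENNReal.ofReal_ne_top
      _ ≤ ENNReal.ofReal K * (ENNReal.ofReal ((sR ^ d)⁻¹) * Z) :=
          mul_le_mul_right key _
  calc Z⁻¹ * ∫⁻ y, (‖y‖₊ : ℝ≥0∞) ^ (2 * k) * g (θU + y)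
      ≤ Z⁻¹ * (ENNReal.ofReal K * (ENNReal.ofReal ((sR ^ d)⁻¹) * Z)) :=
        mul_le_mul_right hbound _
    _ = ENNReal.ofReal K * ENNReal.ofReal ((sR ^ d)⁻¹) * (Z⁻¹ * Z) := by ring
    _ = ENNReal.ofReal (K * (sR ^ d)⁻¹) := by
        rw [ENNReal.inv_mul_cancel hZ0 hZtop, mul_one, ENNReal.ofReal_mul hKpos.le]
    _ ≤ ENNReal.ofReal ((2 * ((d : ℝ) + 2 * k) / mhat) ^ k) := by
        apply ENNReal.ofReal_le_ofReal
        -- final real arithmetic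
        have hexp : (sR⁻¹) ^ (d + k) ≤ Real.exp kR := by
          have h1 : sR⁻¹ = 1 + kR / (D + kR) := by
            rw [hsR]; field_simp [hT]; ring
          have h2 : sR⁻¹ ≤ Real.exp (kR / (D + kR)) := by
            rw [h1]
            have := Real.add_one_le_exp (kR / (D + kR))
            linarith
          calc (sR⁻¹) ^ (d + k) ≤ (Real.exp (kR / (D + kR))) ^ (d + k) :=
                pow_le_pow_left₀ (by positivity) h2 _
            _ = Real.exp (((d + k : ℕ) : ℝ) * (kR / (D + kR))) := by
                rw [← Real.exp_nat_mul]
            _ = Real.exp kR := by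
                congr 1
                have hcast : ((d + k : ℕ) : ℝ) = D + kR := by rw [hD, hkR]; push_cast; ring
                rw [hcast]
                have hne : D + kR ≠ 0 := by positivity
                field_simp
        have hbase : (2 * T / mhat) * c = sR * kR := by
          rw [hc, h1s]
          field_simp
        have hpow : (2 * T / mhat) ^ k * c ^ k = (sR * kR) ^ k := by
          rw [← mul_pow, hbase]
        have h5 : Real.exp (-kR) ≤ sR ^ (d + k) := by
          rw [Real.exp_neg, inv_pow] at *
          exact (inv_le_comm₀ (by positivity) (Real.exp_pos _)).mp hexp
        have hcancel : sR ^ (d + k) * (sR ^ d)⁻¹ = sR ^ k := by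
          rw [pow_add]
          field_simp
        have hgoal2 : (2 * ((d : ℝ) + 2 * (k : ℝ)) / mhat) ^ k = (2 * T / mhat) ^ k := by
          rw [hT, hD, hkR]
        rw [hK, hgoal2, div_mul_eq_mul_div, div_le_iff₀ (pow_pos hcpos k)]
        calc kR ^ k * Real.exp (-kR) * (sR ^ d)⁻¹
            ≤ kR ^ k * sR ^ (d + k) * (sR ^ d)⁻¹ := by
              apply mul_le_mul_of_nonneg_right _ (by positivity)
              exact mul_le_mul_of_nonneg_left h5 (by positivity)
          _ = sR ^ k * kR ^ k := by rw [mul_assoc, hcancel]; ring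
          _ = (sR * kR) ^ k := by rw [mul_pow]
          _ = (2 * T / mhat) ^ k * c ^ k := hpow.symm

/-- `Wpp d p μ ν` is the `p`-th power of the Wasserstein-`p` distance between two measures
on `ℝ^d`: the infimum over couplings `γ` of `μ` and `ν` of `∫ ‖x − y‖^p dγ(x,y)`. -/
noncomputable def Wpp (d : ℕ) (p : ℝ)
    (μ ν : Measure (EuclideanSpace ℝ (Fin d))) : ℝ≥0∞ :=
  ⨅ (γ : Measure (EuclideanSpace ℝ (Fin d) × EuclideanSpace ℝ (Fin d)))
    (_ : γ.map Prod.fst = μ) (_ : γ.map Prod.snd = ν),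
      ∫⁻ z, (‖z.1 - z.2‖₊ : ℝ≥0∞) ^ p ∂γ

/-- For any probability measure `μ` on `ℝ^d`, an `m̂`-strongly
log-concave probability measure `μ* ∝ e^{−U}` with mode `θ_U*`, and a positive even
integer `p`:
`E_{θ∼μ} ‖θ − θ_U*‖^p ≤ 2^{p−1} W_p^p(μ, μ*) + (10^p/2) (dp/m̂)^{p/2}`. -/
theorem moment_to_mode_via_wasserstein
    (d : ℕ) (hd : 0 < d) (mhat : ℝ) (hm : 0 < mhat)
    (U : EuclideanSpace ℝ (Fin d) → ℝ)
    (hU : StrongConvexOn Set.univ mhat U)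
    (θU : EuclideanSpace ℝ (Fin d)) (hmode : ∀ θ, U θU ≤ U θ)
    (μstar : Measure (EuclideanSpace ℝ (Fin d))) [IsProbabilityMeasure μstar]
    (hμ : ∀ s : Set (EuclideanSpace ℝ (Fin d)), MeasurableSet s →
      μstar s = (∫⁻ θ in s, ENNReal.ofReal (Real.exp (-U θ)))
        / ∫⁻ θ, ENNReal.ofReal (Real.exp (-U θ)))
    (μ : Measure (EuclideanSpace ℝ (Fin d))) [IsProbabilityMeasure μ]
    (p : ℕ) (hp : 0 < p) (hpe : Even p) :
    (∫⁻ θ, (‖θ - θU‖₊ : ℝ≥0∞) ^ (p : ℝ) ∂μ)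
      ≤ ENNReal.ofReal ((2 : ℝ) ^ (p - 1)) * Wpp d p μ μstar
        + ENNReal.ofReal ((10 ^ p / 2) * ((d * p : ℝ) / mhat) ^ ((p : ℝ) / 2)) := by
  classical
  obtain ⟨k, hk2⟩ := hpe
  have hpk : p = 2 * k := by omega
  have hk : 0 < k := by omega
  subst hpk
  simp only [ENNReal.rpow_natCast]
  -- abbreviations
  set c2 : ℝ≥0∞ := (2 : ℝ≥0∞) ^ (2 * k - 1) with hc2
  have hc2eq : ENNReal.ofReal ((2 : ℝ) ^ (2 * k - 1)) = c2 := by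
    rw [hc2, ENNReal.ofReal_pow (by norm_num : (0:ℝ) ≤ 2)]
    norm_num
  have hc20 : c2 ≠ 0 := by
    rw [hc2]; exact pow_ne_zero _ (by norm_num)
  have hc2top : c2 ≠ ∞ := by
    rw [hc2]; exact ENNReal.pow_ne_top (by norm_num)
  set M : ℝ≥0∞ := ∫⁻ θ, (‖θ - θU‖₊ : ℝ≥0∞) ^ (2 * k) ∂μstar with hM
  set B : ℝ := (2 * ((d : ℝ) + 2 * k) / mhat) ^ k with hB
  have hMB : M ≤ ENNReal.ofReal B := momentBound d hd mhat hm U hU θU hmode μstar hμ k hk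
  set C : ℝ := ((10:ℝ) ^ (2 * k) / 2) * (((d : ℝ) * ((2 * k : ℕ) : ℝ)) / mhat) ^ (((2 * k : ℕ) : ℝ) / 2)
    with hC
  -- tail arithmetic: c2 * ofReal B ≤ ofReal C
  have htail : c2 * ENNReal.ofReal B ≤ ENNReal.ofReal C := by
    rw [← hc2eq, ← ENNReal.ofReal_mul (by positivity)]
    apply ENNReal.ofReal_le_ofReal
    rw [hB, hC]
    set D : ℝ := (d : ℝ) with hD
    set K : ℝ := (k : ℝ) with hK
    have hD1 : 1 ≤ D := by rw [hD]; exact_mod_cast hd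
    have hK1 : 1 ≤ K := by rw [hK]; exact_mod_cast hk
    have hrexp : (((2 * k : ℕ) : ℝ) / 2) = ((k : ℕ) : ℝ) := by push_cast; ring
    rw [hrexp, Real.rpow_natCast]
    have hcast : ((2 * k : ℕ) : ℝ) = 2 * K := by rw [hK]; push_cast; ring
    rw [hcast]
    have h2pow : (2:ℝ) ^ (2 * k - 1) = 2 ^ (2 * k) / 2 := by
      rw [eq_div_iff (by norm_num : (2:ℝ) ≠ 0), ← pow_succ]
      congr 1
      omega
    rw [h2pow]
    have e1 : (2:ℝ) ^ (2 * k) = 4 ^ k := by rw [pow_mul]; norm_num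
    have e2 : (10:ℝ) ^ (2 * k) = 100 ^ k := by rw [pow_mul]; norm_num
    rw [e1, e2, div_mul_eq_mul_div, div_mul_eq_mul_div]
    apply div_le_div_of_nonneg_right _ (by norm_num)
    rw [← mul_pow, ← mul_pow]
    apply pow_le_pow_left₀ (by positivity)
    rw [mul_div_assoc', mul_div_assoc']
    apply div_le_div_of_nonneg_right _ hm.le
    nlinarith [mul_le_mul hD1 hK1 (by norm_num : (0:ℝ) ≤ 1) (by linarith),
      mul_pos (by linarith : (0:ℝ) < D) (by linarith : (0:ℝ) < K)]
  -- per-coupling bound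
  have hfmeas : Measurable fun θ : EuclideanSpace ℝ (Fin d) =>
      (‖θ - θU‖₊ : ℝ≥0∞) ^ (2 * k) :=
    ((measurable_id.sub measurable_const).nnnorm.coe_nnreal_ennreal).pow_const _
  have hcoup : ∀ γ : Measure (EuclideanSpace ℝ (Fin d) × EuclideanSpace ℝ (Fin d)),
      γ.map Prod.fst = μ → γ.map Prod.snd = μstar →
      (∫⁻ θ, (‖θ - θU‖₊ : ℝ≥0∞) ^ (2 * k) ∂μ)
        ≤ c2 * (∫⁻ z, (‖z.1 - z.2‖₊ : ℝ≥0∞) ^ (2 * k) ∂γ) + c2 * M := by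
    intro γ h1 h2
    have hm1 : Measurable fun z : EuclideanSpace ℝ (Fin d) × EuclideanSpace ℝ (Fin d) =>
        (‖z.1 - z.2‖₊ : ℝ≥0∞) ^ (2 * k) :=
      ((measurable_fst.sub measurable_snd).nnnorm.coe_nnreal_ennreal).pow_const _
    have hMγ : M = ∫⁻ z, (‖z.2 - θU‖₊ : ℝ≥0∞) ^ (2 * k) ∂γ := by
      rw [hM, ← h2, lintegral_map hfmeas measurable_snd]
    have hLγ : (∫⁻ θ, (‖θ - θU‖₊ : ℝ≥0∞) ^ (2 * k) ∂μ)
        = ∫⁻ z, (‖z.1 - θU‖₊ : ℝ≥0∞) ^ (2 * k) ∂γ := by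
      rw [← h1, lintegral_map hfmeas measurable_fst]
    rw [hMγ, hLγ]
    have ptw : ∀ z : EuclideanSpace ℝ (Fin d) × EuclideanSpace ℝ (Fin d),
        (‖z.1 - θU‖₊ : ℝ≥0∞) ^ (2 * k)
          ≤ c2 * ((‖z.1 - z.2‖₊ : ℝ≥0∞) ^ (2 * k) + (‖z.2 - θU‖₊ : ℝ≥0∞) ^ (2 * k)) := by
      intro z
      have htri : ‖z.1 - θU‖₊ ≤ ‖z.1 - z.2‖₊ + ‖z.2 - θU‖₊ := by
        have : z.1 - θU = (z.1 - z.2) + (z.2 - θU) := by abel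
        rw [this]
        exact nnnorm_add_le _ _
      have hnn : ‖z.1 - θU‖₊ ^ (2 * k)
          ≤ 2 ^ (2 * k - 1) * (‖z.1 - z.2‖₊ ^ (2 * k) + ‖z.2 - θU‖₊ ^ (2 * k)) :=
        (pow_le_pow_left₀ zero_le htri _).trans
          (add_pow_le zero_le zero_le _)
      have := ENNReal.coe_le_coe.mpr hnn
      push_cast at this
      rw [hc2]
      exact_mod_cast this
    calc (∫⁻ z, (‖z.1 - θU‖₊ : ℝ≥0∞) ^ (2 * k) ∂γ)
        ≤ ∫⁻ z, c2 * ((‖z.1 - z.2‖₊ : ℝ≥0∞) ^ (2 * k)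
            + (‖z.2 - θU‖₊ : ℝ≥0∞) ^ (2 * k)) ∂γ := lintegral_mono ptw
      _ = c2 * ∫⁻ z, ((‖z.1 - z.2‖₊ : ℝ≥0∞) ^ (2 * k)
            + (‖z.2 - θU‖₊ : ℝ≥0∞) ^ (2 * k)) ∂γ := lintegral_const_mul' _ _ hc2top
      _ = c2 * ((∫⁻ z, (‖z.1 - z.2‖₊ : ℝ≥0∞) ^ (2 * k) ∂γ)
            + ∫⁻ z, (‖z.2 - θU‖₊ : ℝ≥0∞) ^ (2 * k) ∂γ) := by
          rw [lintegral_add_left hm1]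
      _ = _ := by rw [mul_add]
  -- conclude via the infimum
  rw [hc2eq]
  set W : ℝ≥0∞ := Wpp d ((2 * k : ℕ) : ℝ) μ μstar with hW
  by_cases hWtop : W = ∞
  · rw [hWtop, ENNReal.mul_top hc20]
    exact le_top.trans_eq (by rw [top_add])
  · apply ENNReal.le_of_forall_pos_le_add
    intro ε hε hlt
    set δ : ℝ≥0∞ := (ε : ℝ≥0∞) / c2 with hδ
    have hδ0 : δ ≠ 0 := by
      rw [hδ, Ne, ENNReal.div_eq_zero_iff]
      push_neg
      exact ⟨by exact_mod_cast hε.ne', hc2top⟩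
    have hWlt : W < W + δ := ENNReal.lt_add_right hWtop hδ0
    have hex : ∃ γ : Measure (EuclideanSpace ℝ (Fin d) × EuclideanSpace ℝ (Fin d)),
        γ.map Prod.fst = μ ∧ γ.map Prod.snd = μstar ∧
        (∫⁻ z, (‖z.1 - z.2‖₊ : ℝ≥0∞) ^ ((2 * k : ℕ) : ℝ) ∂γ) < W + δ := by
      by_contra hcon
      push_neg at hcon
      have hle : W + δ ≤ W := by
        rw [hW, Wpp]
        exact le_iInf fun γ => le_iInf fun h1 => le_iInf fun h2 => hcon γ h1 h2
      exact absurd hle hWlt.not_ge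
    obtain ⟨γ, h1, h2, hγlt⟩ := hex
    have hγlt' : (∫⁻ z, (‖z.1 - z.2‖₊ : ℝ≥0∞) ^ (2 * k) ∂γ) < W + δ := by
      simpa only [ENNReal.rpow_natCast] using hγlt
    calc (∫⁻ θ, (‖θ - θU‖₊ : ℝ≥0∞) ^ (2 * k) ∂μ)
        ≤ c2 * (∫⁻ z, (‖z.1 - z.2‖₊ : ℝ≥0∞) ^ (2 * k) ∂γ) + c2 * M := hcoup γ h1 h2
      _ ≤ c2 * (W + δ) + ENNReal.ofReal C :=
          add_le_add (mul_le_mul_right hγlt'.le _) ((mul_le_mul_right hMB _).trans htail)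
      _ ≤ (c2 * W + ENNReal.ofReal C) + ε := by
          rw [mul_add]
          have : c2 * δ ≤ ε := by rw [hδ]; exact ENNReal.mul_div_le
          calc c2 * W + c2 * δ + ENNReal.ofReal C
              ≤ c2 * W + ε + ENNReal.ofReal C := by gcongr
            _ = (c2 * W + ENNReal.ofReal C) + ε := by ring
end

section
/- Let Y be a random vector in ℝ^d whose even moments satisfy E[‖Y‖^{2i}] ≤ 3·((2D + 4σi)/M)^i for all integers i ≥ 1, for some constants D, σ, M > 0. Then for every λ with 0 ≤ λ ≤ M/(32σ): E[e^{λ‖Y‖²}] ≤ (3/2)·(e^{4λD/M} + 2.5). -/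
open MeasureTheory
open scoped ENNReal RealInnerProductSpace BigOperators Nat

lemma real_exp_eq_tsum (x : ℝ) : Real.exp x = ∑' n : ℕ, x ^ n / n ! := by
  rw [Real.exp_eq_exp_ℝ, NormedSpace.exp_eq_tsum_div]

lemma pow_div_factorial_le_exp' {x : ℝ} (hx : 0 ≤ x) (n : ℕ) :
    x ^ n / n ! ≤ Real.exp x := by
  refine le_trans ?_ (Real.sum_le_exp_of_nonneg hx (n + 1))
  exact Finset.single_le_sum (f := fun i => x ^ i / i !)
    (fun i _ => by positivity) (Finset.self_mem_range_succ n)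

lemma pow_self_le_exp_mul_factorial' (n : ℕ) :
    (n : ℝ) ^ n ≤ Real.exp 1 ^ n * n ! := by
  have h := pow_div_factorial_le_exp' (x := (n : ℝ)) (Nat.cast_nonneg n) n
  rw [div_le_iff₀ (by positivity)] at h
  calc (n:ℝ)^n ≤ Real.exp n * n ! := h
    _ = Real.exp 1 ^ n * n ! := by rw [← Real.exp_one_rpow, Real.rpow_natCast]

lemma per_term (lam D σ M : ℝ) (hD : 0 < D) (hσ : 0 < σ) (hM : 0 < M)
    (hlam0 : 0 ≤ lam) (hq : 8 * lam * σ / M ≤ 1 / 4) (i : ℕ) (hi : 1 ≤ i) :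
    3 * ((2 * D + 4 * σ * i) / M) ^ i * (lam ^ i / i !)
      ≤ (3 / 2) * ((4 * lam * D / M) ^ i / i !) + (3 / 2) * (0.68 : ℝ) ^ i := by
  have hfac : (0:ℝ) < i ! := by exact_mod_cast Nat.factorial_pos i
  have ha : (0:ℝ) ≤ 2 * lam * D / M := by positivity
  have hb : (0:ℝ) ≤ 4 * lam * σ * i / M := by positivity
  have h2 : ((2 * D + 4 * σ * i) / M) ^ i * lam ^ i
      = (2 * lam * D / M + 4 * lam * σ * i / M) ^ i := by
    rw [← mul_pow]; congr 1; field_simp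
  have h3 := add_pow_le ha hb i
  have h4 : (2:ℝ) ^ (i - 1) = 2 ^ i / 2 := by
    obtain ⟨k, rfl⟩ := Nat.exists_eq_add_of_le hi
    simp [pow_add]
  have hA : (2:ℝ) ^ i * (2 * lam * D / M) ^ i = (4 * lam * D / M) ^ i := by
    rw [← mul_pow]; congr 1; ring
  have hB : (2:ℝ) ^ i * (4 * lam * σ * i / M) ^ i / i ! ≤ (0.68 : ℝ) ^ i := by
    have e1 : (2:ℝ) ^ i * (4 * lam * σ * i / M) ^ i = ((8 * lam * σ / M) * i) ^ i := by
      rw [← mul_pow]; congr 1; ring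
    have e2 : ((8 * lam * σ / M) * i) ^ i ≤ ((1/4 : ℝ) * i) ^ i := by
      apply pow_le_pow_left₀ (by positivity)
      exact mul_le_mul_of_nonneg_right hq (Nat.cast_nonneg i)
    have e3 : ((1/4 : ℝ) * i) ^ i = (1/4 : ℝ) ^ i * (i:ℝ) ^ i := mul_pow _ _ _
    have e4 : (1/4 : ℝ) ^ i * (i:ℝ) ^ i ≤ (1/4 : ℝ) ^ i * (Real.exp 1 ^ i * i !) :=
      mul_le_mul_of_nonneg_left (pow_self_le_exp_mul_factorial' i) (by positivity)
    have e5 : (1/4 : ℝ) ^ i * Real.exp 1 ^ i ≤ (0.68 : ℝ) ^ i := by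
      rw [← mul_pow]
      apply pow_le_pow_left₀ (by positivity)
      have := Real.exp_one_lt_d9
      nlinarith
    rw [div_le_iff₀ hfac, e1]
    calc ((8 * lam * σ / M) * i) ^ i ≤ (1/4 : ℝ) ^ i * ((i:ℝ) ^ i) := by
          rw [← e3]; exact e2
      _ ≤ (1/4 : ℝ) ^ i * (Real.exp 1 ^ i * i !) := e4
      _ = ((1/4 : ℝ) ^ i * Real.exp 1 ^ i) * i ! := by ring
      _ ≤ (0.68 : ℝ) ^ i * i ! := mul_le_mul_of_nonneg_right e5 hfac.le
  calc 3 * ((2 * D + 4 * σ * i) / M) ^ i * (lam ^ i / i !)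
      = 3 * ((2 * lam * D / M + 4 * lam * σ * i / M) ^ i) / i ! := by
        rw [← h2]; ring
    _ ≤ 3 * (2 ^ (i-1) * ((2 * lam * D / M) ^ i + (4 * lam * σ * i / M) ^ i)) / i ! := by
        gcongr
    _ = (3/2) * ((2:ℝ) ^ i * (2 * lam * D / M) ^ i) / i !
        + (3/2) * ((2:ℝ) ^ i * (4 * lam * σ * i / M) ^ i / i !) := by
        rw [h4]; ring
    _ ≤ (3 / 2) * ((4 * lam * D / M) ^ i / i !) + (3 / 2) * (0.68 : ℝ) ^ i := by
        rw [hA, mul_div_assoc]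
        have := mul_le_mul_of_nonneg_left hB (by norm_num : (0:ℝ) ≤ 3/2)
        linarith [this]

set_option maxHeartbeats 1000000 in
/-- Sub-exponential MGF bound from polynomial even-moment growth:
if a random vector `Y` in `ℝ^d` satisfies `E ‖Y‖^{2i} ≤ 3 ((2D + 4σi)/M)^i` for all
integers `i ≥ 1`, then for every `0 ≤ λ ≤ M/(32σ)`,
`E e^{λ‖Y‖²} ≤ (3/2) (e^{4λD/M} + 2.5)`. -/
theorem mgf_from_even_moments
    (d : ℕ) (hd : 0 < d)
    (Ω : Type*) [MeasurableSpace Ω] (P : Measure Ω) [IsProbabilityMeasure P]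
    (Y : Ω → EuclideanSpace ℝ (Fin d)) (hY : Measurable Y)
    (D σ M : ℝ) (hD : 0 < D) (hσ : 0 < σ) (hM : 0 < M)
    (hmom : ∀ i : ℕ, 1 ≤ i →
      (∫ ω, ‖Y ω‖ ^ (2 * i) ∂P) ≤ 3 * ((2 * D + 4 * σ * i) / M) ^ i) :
    ∀ lam : ℝ, 0 ≤ lam → lam ≤ M / (32 * σ) →
      (∫ ω, Real.exp (lam * ‖Y ω‖ ^ 2) ∂P)
        ≤ (3 / 2) * (Real.exp (4 * lam * D / M) + 2.5) := by
  intro lam hlam0 hlam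
  rcases eq_or_lt_of_le hlam0 with h0 | hpos
  · -- lam = 0
    rw [← h0]
    simp only [zero_mul, Real.exp_zero, mul_zero, zero_div]
    rw [integral_const]
    simp only [measure_univ, ENNReal.toReal_one, smul_eq_mul, one_mul]
    norm_num
  by_cases hint : Integrable (fun ω => Real.exp (lam * ‖Y ω‖ ^ 2)) P
  swap
  · rw [integral_undef hint]; positivity
  have hmeas : Measurable fun ω => ‖Y ω‖ := hY.norm
  have hmeast : Measurable fun ω => lam * ‖Y ω‖ ^ 2 :=
    measurable_const.mul (hmeas.pow_const 2)
  have hq : 8 * lam * σ / M ≤ 1 / 4 := by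
    have h1 : lam * (32 * σ) ≤ M := (le_div_iff₀ (by positivity)).1 hlam
    rw [div_le_iff₀ hM]
    nlinarith
  -- integrability of moments
  have hmomInt : ∀ i : ℕ, Integrable (fun ω => ‖Y ω‖ ^ (2 * i)) P := by
    intro i
    refine Integrable.mono' (hint.const_mul ((i ! : ℝ) / lam ^ i))
      ((hmeas.pow_const _).aestronglyMeasurable) ?_
    filter_upwards with ω
    rw [Real.norm_eq_abs, abs_of_nonneg (by positivity)]
    have h1 : (lam * ‖Y ω‖ ^ 2) ^ i / i ! ≤ Real.exp (lam * ‖Y ω‖ ^ 2) :=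
      pow_div_factorial_le_exp' (by positivity) i
    have hfac : (0:ℝ) < i ! := by exact_mod_cast Nat.factorial_pos i
    have h2 : ‖Y ω‖ ^ (2 * i) = ((i ! : ℝ) / lam ^ i) * ((lam * ‖Y ω‖ ^ 2) ^ i / i !) := by
      rw [pow_mul, mul_pow]
      field_simp
    rw [h2]
    exact mul_le_mul_of_nonneg_left h1 (by positivity)
  -- per-index lintegral bound
  have key : ∀ i : ℕ, 1 ≤ i →
      (∫⁻ ω, ENNReal.ofReal ((lam * ‖Y ω‖ ^ 2) ^ i / i !) ∂P)
        ≤ ENNReal.ofReal (3 * ((2 * D + 4 * σ * i) / M) ^ i * (lam ^ i / i !)) := by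
    intro i hi
    have hpt : ∀ ω, ENNReal.ofReal ((lam * ‖Y ω‖ ^ 2) ^ i / i !)
        = ENNReal.ofReal (lam ^ i / i !) * ENNReal.ofReal (‖Y ω‖ ^ (2 * i)) := by
      intro ω
      rw [← ENNReal.ofReal_mul (by positivity)]
      congr 1
      rw [pow_mul, mul_pow]
      ring
    simp_rw [hpt]
    rw [lintegral_const_mul' _ _ ENNReal.ofReal_ne_top]
    rw [← ofReal_integral_eq_lintegral_ofReal (hmomInt i)
      (Filter.Eventually.of_forall fun ω => by positivity)]
    rw [← ENNReal.ofReal_mul (by positivity)]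
    apply ENNReal.ofReal_le_ofReal
    have := hmom i hi
    calc lam ^ i / i ! * ∫ ω, ‖Y ω‖ ^ (2 * i) ∂P
        ≤ lam ^ i / i ! * (3 * ((2 * D + 4 * σ * i) / M) ^ i) :=
          mul_le_mul_of_nonneg_left this (by positivity)
      _ = 3 * ((2 * D + 4 * σ * i) / M) ^ i * (lam ^ i / i !) := by ring
  -- series expansion of the exp lintegral
  have hswap : (∫⁻ ω, ENNReal.ofReal (Real.exp (lam * ‖Y ω‖ ^ 2)) ∂P)
      = ∑' i : ℕ, ∫⁻ ω, ENNReal.ofReal ((lam * ‖Y ω‖ ^ 2) ^ i / i !) ∂P := by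
    have hexp_eq : ∀ ω, ENNReal.ofReal (Real.exp (lam * ‖Y ω‖ ^ 2))
        = ∑' i : ℕ, ENNReal.ofReal ((lam * ‖Y ω‖ ^ 2) ^ i / i !) := by
      intro ω
      rw [real_exp_eq_tsum]
      exact ENNReal.ofReal_tsum_of_nonneg (fun n => by positivity)
        (Real.summable_pow_div_factorial _)
    simp_rw [hexp_eq]
    exact lintegral_tsum fun i =>
      (((hmeast.pow_const i).div_const _).ennreal_ofReal).aemeasurable
  -- numeric series bound
  set x : ℝ := 4 * lam * D / M with hxdef
  have hx0 : 0 ≤ x := by positivity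
  set v : ℕ → ℝ := fun i => (3/2) * (x ^ i / i !) + (3/2) * (0.68 : ℝ) ^ i with hvdef
  have hv0 : ∀ i, 0 ≤ v i := fun i => by positivity
  have hvsum1 : Summable fun i : ℕ => (3/2 : ℝ) * (x ^ i / i !) :=
    (Real.summable_pow_div_factorial x).mul_left _
  have hvsum2 : Summable fun i : ℕ => (3/2 : ℝ) * (0.68 : ℝ) ^ i :=
    (summable_geometric_of_lt_one (by norm_num) (by norm_num)).mul_left _
  have hvsum : Summable v := hvsum1.add hvsum2
  have hvtsum : ∑' i, v i = (3/2) * Real.exp x + (3/2) * (1 - 0.68)⁻¹ := by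
    rw [hvdef, Summable.tsum_add hvsum1 hvsum2, tsum_mul_left, tsum_mul_left,
      ← real_exp_eq_tsum, tsum_geometric_of_lt_one (by norm_num) (by norm_num)]
  have hshiftsum : Summable fun i : ℕ => v (i + 1) := (summable_nat_add_iff 1).2 hvsum
  have hshift : ∑' i, v (i + 1) = (∑' i, v i) - v 0 := by
    have := Summable.tsum_eq_zero_add hvsum
    linarith
  -- assemble
  rw [integral_eq_lintegral_of_nonneg_ae
    (Filter.Eventually.of_forall fun ω => (Real.exp_pos _).le)
    (Real.measurable_exp.comp hmeast).aestronglyMeasurable]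
  refine ENNReal.toReal_le_of_le_ofReal (by positivity) ?_
  rw [hswap]
  have hB0 : (∫⁻ ω, ENNReal.ofReal ((lam * ‖Y ω‖ ^ 2) ^ 0 / (0 ! : ℕ)) ∂P) = 1 := by
    simp
  set B : ℕ → ℝ≥0∞ := fun i => ∫⁻ ω, ENNReal.ofReal ((lam * ‖Y ω‖ ^ 2) ^ i / i !) ∂P
    with hBdef
  have hB0 : B 0 = 1 := by
    rw [hBdef]
    simp
  have hBsucc : ∀ i : ℕ, B (i + 1) ≤ ENNReal.ofReal (v (i + 1)) := by
    intro i
    refine (key (i+1) (Nat.le_add_left 1 i)).trans (ENNReal.ofReal_le_ofReal ?_)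
    have hpt := per_term lam D σ M hD hσ hM hlam0 hq (i+1) (Nat.le_add_left 1 i)
    rw [hvdef]
    push_cast at hpt ⊢
    linarith
  calc ∑' i : ℕ, B i = B 0 + ∑' i : ℕ, B (i + 1) := tsum_eq_zero_add' ENNReal.summable
    _ ≤ 1 + ∑' i : ℕ, ENNReal.ofReal (v (i + 1)) := by
        rw [hB0]
        gcongr with i
        exact hBsucc i
    _ = 1 + ENNReal.ofReal (∑' i, v (i + 1)) := by
        rw [ENNReal.ofReal_tsum_of_nonneg (fun i => hv0 _) hshiftsum]
    _ ≤ ENNReal.ofReal ((3:ℝ)/2 * (Real.exp x + 2.5)) := by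
        rw [← ENNReal.ofReal_one, ← ENNReal.ofReal_add (by norm_num) (tsum_nonneg fun i => hv0 _)]
        apply ENNReal.ofReal_le_ofReal
        rw [hshift, hvtsum]
        have hv0' : v 0 = 3 := by rw [hvdef]; norm_num
        rw [hv0']
        norm_num
        linarith
end
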